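/- Let f, g, w ∈ ℝ^d with ⟨f, w⟩ = 0 and ⟨g, w⟩ ≠ 0. Then the matrix S = (f gᵀ − g fᵀ)/⟨g, w⟩ is skew-symmetric and satisfies S w = f. (Taking w = ∇H(x) and g = g(x) any non-vanishing vector field with ⟨g(x), ∇H(x)⟩ ≠ 0, this gives a skew-gradient form of any system x' = f(x) with first integral H.) -/

import Mathlib

open Matrix

/-- For `f, g, w ∈ ℝ^d` with `⟨f, w⟩ = 0` and `⟨g, w⟩ ≠ 0`, the matrix
`S = (f gᵀ − g fᵀ)/⟨g, w⟩` is skew-symmetric and satisfies `S w = f`. -/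
theorem generalized_default_formula_skew_gradient_form
    (d : ℕ) (f g w : Fin d → ℝ) (hfw : f ⬝ᵥ w = 0) (hgw : g ⬝ᵥ w ≠ 0) :
    ((g ⬝ᵥ w)⁻¹ • (vecMulVec f g - vecMulVec g f))ᵀ
        = -((g ⬝ᵥ w)⁻¹ • (vecMulVec f g - vecMulVec g f)) ∧
      ((g ⬝ᵥ w)⁻¹ • (vecMulVec f g - vecMulVec g f)).mulVec w = f := by
  constructor
  · ext i j
    simp [vecMulVec, mul_comm]
    ring
  · ext i
    have hgw' : ∑ j, g j * w j ≠ 0 := by simpa [dotProduct] using hgw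
    have h : ∑ j, f j * w j = 0 := by simpa [dotProduct] using hfw
    simp only [mulVec, dotProduct, vecMulVec, Matrix.smul_apply, Matrix.sub_apply, of_apply,
      smul_eq_mul, mul_sub, sub_mul, Finset.sum_sub_distrib]
    have h1 : ∑ x, (∑ j, g j * w j)⁻¹ * (f i * g x) * w x
        = (∑ j, g j * w j)⁻¹ * (f i * ∑ x, g x * w x) := by
      rw [Finset.mul_sum, Finset.mul_sum]
      refine Finset.sum_congr rfl fun x _ => by ring
    have h2 : ∑ x, (∑ j, g j * w j)⁻¹ * (g i * f x) * w x
        = (∑ j, g j * w j)⁻¹ * (g i * ∑ x, f x * w x) := by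
      rw [Finset.mul_sum, Finset.mul_sum]
      refine Finset.sum_congr rfl fun x _ => by ring
    rw [h1, h2, h, mul_zero, mul_zero, sub_zero]
    field_simp
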